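/- arXiv:1107.1290 — 2 statements merged into one kernel-verified Lean document; each statement's English description precedes it below -/
import Mathlib

section
/- Let W ∈ ℂ[z₁,…,z_N] be a nondegenerate quasi-homogeneous polynomial of type (q₁,…,q_N) with all weights qᵢ ≤ 1/2. Then the section-bundle system (ℂ^N, W) with the standard flat metric is strongly regular tame: for every integer s ≥ 1 and every constant C > 0, (Σᵢ|∂W/∂zᵢ(z)|²)^s − C·Σ_{|I|=2s}|∂^I W(z)| → ∞ as ‖z‖ → ∞ in ℂ^N, where the sum runs over all multi-indices I = (i₁,…,i_{2s}) of order 2s and ∂^I W = ∂^{2s}W/∂z_{i₁}⋯∂z_{i_{2s}}. -/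
open MvPolynomial


section Aux

variable {N : ℕ}

/-- Scaling equivariance predicate: `P(t^k • z) = t^e P(z)` for all `t > 0`. -/
def ScalEqAux (k : Fin N → ℕ) (e : ℤ) (P : MvPolynomial (Fin N) ℂ) : Prop :=
  ∀ t : ℝ, 0 < t → ∀ z : Fin N → ℂ,
    eval (fun j => (t : ℂ) ^ (k j) * z j) P = (t : ℂ) ^ e * eval z P

lemma pderiv_scaleSubstAux (c : Fin N → ℂ) (i : Fin N) (P : MvPolynomial (Fin N) ℂ) :
    pderiv i (aeval (fun j => C (c j) * X j) P)
      = C (c i) * aeval (fun j => C (c j) * X j) (pderiv i P) := by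
  induction P using MvPolynomial.induction_on with
  | C a => simp
  | add p q hp hq => simp only [map_add, hp, hq, mul_add]
  | mul_X p j ih =>
      simp only [map_mul, aeval_X, pderiv_mul, ih, pderiv_C, map_add, zero_mul, add_zero]
      by_cases h : j = i
      · subst h; simp only [pderiv_X_self, map_one, mul_one]; ring
      · simp only [pderiv_X_of_ne (show j ≠ i from h), map_zero, mul_zero, add_zero, zero_mul]
        ring

lemma eval_scaleSubstAux (c : Fin N → ℂ) (z : Fin N → ℂ) (P : MvPolynomial (Fin N) ℂ) :
    eval z (aeval (fun j => C (c j) * X j) P) = eval (fun j => c j * z j) P := by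
  induction P using MvPolynomial.induction_on with
  | C a => simp
  | add p q hp hq => simp only [map_add, hp, hq]
  | mul_X p j ih => simp only [map_mul, aeval_X, eval_mul, eval_C, eval_X, ih]

lemma ScalEqAux.pderiv {k : Fin N → ℕ} {e : ℤ} {P : MvPolynomial (Fin N) ℂ}
    (h : ScalEqAux k e P) (i : Fin N) : ScalEqAux k (e - k i) (pderiv i P) := by
  intro t ht z
  have htc : (t : ℂ) ≠ 0 := by exact_mod_cast ht.ne'
  set c : Fin N → ℂ := fun j => (t : ℂ) ^ (k j) with hc
  have hS : aeval (fun j => C (c j) * X j) P = C ((t : ℂ) ^ e) * P := by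
    apply MvPolynomial.funext
    intro w
    rw [eval_scaleSubstAux, eval_mul, eval_C, h t ht w]
  have hchain := pderiv_scaleSubstAux c i P
  rw [hS, pderiv_C_mul] at hchain
  have h2 := congrArg (eval z) hchain
  rw [eval_mul, eval_C, eval_mul, eval_C, eval_scaleSubstAux] at h2
  have hci : c i = (t : ℂ) ^ (k i : ℤ) := by simp [hc, zpow_natCast]
  rw [zpow_sub₀ htc]
  field_simp [hci] at h2 ⊢
  simp only [zpow_natCast] at h2 ⊢
  linear_combination -h2

lemma ScalEqAux.foldl {k : Fin N → ℕ} (L : List (Fin N)) :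
    ∀ {e : ℤ} {P : MvPolynomial (Fin N) ℂ}, ScalEqAux k e P →
    ScalEqAux k (e - (L.map fun j => (k j : ℤ)).sum) (L.foldl (fun p i => MvPolynomial.pderiv i p) P) := by
  induction L with
  | nil => intro e P h; simpa using h
  | cons i L ih =>
      intro e P h
      have := ih (h.pderiv i)
      simpa [List.foldl_cons, sub_sub] using this

lemma ScalEqAux.norm_eval {k : Fin N → ℕ} {e : ℤ} {P : MvPolynomial (Fin N) ℂ}
    (h : ScalEqAux k e P) {t : ℝ} (ht : 0 < t) (z : Fin N → ℂ) :
    ‖eval (fun j => (t : ℂ) ^ (k j) * z j) P‖ = t ^ e * ‖eval z P‖ := by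
  rw [h t ht z, norm_mul, norm_zpow, Complex.norm_real, Real.norm_eq_abs, abs_of_pos ht]

end Aux


/-- squared norm of the gradient of `W`. -/
noncomputable def gradSqAux (N : ℕ) (W : MvPolynomial (Fin N) ℂ) :
    EuclideanSpace ℂ (Fin N) → ℝ :=
  fun z => ∑ i, ‖eval (z : Fin N → ℂ) (pderiv i W)‖ ^ 2

/-- sum of norms of all order-`2s` partial derivatives of `W`. -/
noncomputable def derivSumAux (N s : ℕ) (W : MvPolynomial (Fin N) ℂ) :
    EuclideanSpace ℂ (Fin N) → ℝ :=
  fun z => ∑ I : Fin (2 * s) → Fin N,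
    ‖eval (z : Fin N → ℂ) ((List.ofFn I).foldl (fun p i => pderiv i p) W)‖

lemma gradSqAux_cont (N : ℕ) (W : MvPolynomial (Fin N) ℂ) : Continuous (gradSqAux N W) := by
  apply continuous_finset_sum
  intro i _
  exact (((MvPolynomial.continuous_eval (pderiv i W)).comp
    (PiLp.continuousLinearEquiv 2 ℂ (fun _ : Fin N => ℂ)).continuous).norm).pow 2

lemma derivSumAux_cont (N s : ℕ) (W : MvPolynomial (Fin N) ℂ) : Continuous (derivSumAux N s W) := by
  apply continuous_finset_sum
  intro I _
  exact ((MvPolynomial.continuous_eval _).comp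
    (PiLp.continuousLinearEquiv 2 ℂ (fun _ : Fin N => ℂ)).continuous).norm

set_option maxHeartbeats 1000000 in
/-- **Strong regular tameness of `(ℂ^N, W)`.**
If `W` is a nondegenerate quasi-homogeneous polynomial of type `(q₁,…,q_N)` with all
weights `qᵢ ≤ 1/2`, then for every `s ≥ 1` and every `C > 0` one has
`|∇W|^{2s} − C·Σ_{|I|=2s}|∂^I W| → ∞` as `‖z‖ → ∞`, the sum running over all ordered
multi-indices `I = (i₁,…,i_{2s})` of order `2s`. -/
theorem strongly_regular_tame_quasihomogeneous
    (N : ℕ) (hN : 1 ≤ N) (W : MvPolynomial (Fin N) ℂ)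
    (q : Fin N → ℚ) (k : Fin N → ℕ) (d : ℕ)
    (hk : ∀ i, 0 < k i) (hd : 0 < d)
    (hq : ∀ i, q i = (k i : ℚ) / (d : ℚ))
    (hq0 : ∀ i, 0 < q i) (hq1 : ∀ i, q i < 1)
    (hhom : ∀ (lam : ℂ) (z : Fin N → ℂ),
      eval (fun i => lam ^ (k i) * z i) W = lam ^ d * eval z W)
    (hnd : ∀ z : Fin N → ℂ, (∀ i, eval z (pderiv i W) = 0) → z = 0)
    (hhalf : ∀ i, q i ≤ 1 / 2) :
    ∀ s : ℕ, 1 ≤ s → ∀ C : ℝ, 0 < C → ∀ K : ℝ, ∃ R : ℝ, 0 < R ∧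
      ∀ z : EuclideanSpace ℂ (Fin N), R ≤ ‖z‖ →
        K ≤ (∑ i, ‖eval (z : Fin N → ℂ) (pderiv i W)‖ ^ 2) ^ s
            - C * ∑ I : Fin (2 * s) → Fin N,
                ‖eval (z : Fin N → ℂ)
                  ((List.ofFn I).foldl (fun p i => pderiv i p) W)‖ := by
  intro s hs C hC K
  classical
  -- numeric facts about the weights
  have h2k : ∀ i, 2 * k i ≤ d := by
    intro i
    have h := hhalf i
    rw [hq i, div_le_div_iff₀ (by exact_mod_cast hd) (by norm_num)] at h
    have : ((2 * k i : ℕ) : ℚ) ≤ (d : ℚ) := by push_cast; linarith only [h]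
    exact_mod_cast this
  -- scaling equivariance
  have hW : ScalEqAux k (d : ℤ) W := by
    intro t ht z
    rw [hhom ((t : ℂ)) z, zpow_natCast]
  have hD1 : ∀ i : Fin N, ScalEqAux k ((d : ℤ) - k i) (pderiv i W) := fun i => hW.pderiv i
  have hDI : ∀ I : Fin (2 * s) → Fin N,
      ScalEqAux k ((d : ℤ) - ((List.ofFn I).map fun j => (k j : ℤ)).sum)
        ((List.ofFn I).foldl (fun p i => pderiv i p) W) := fun I => ScalEqAux.foldl _ hW
  have hsumI : ∀ I : Fin (2 * s) → Fin N,
      (2 * s : ℤ) ≤ ((List.ofFn I).map fun j => (k j : ℤ)).sum := by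
    intro I
    rw [List.map_ofFn, List.sum_ofFn]
    calc (2 * s : ℤ) = ∑ _j : Fin (2 * s), (1 : ℤ) := by simp
    _ ≤ ∑ j : Fin (2 * s), ((fun j => (k j : ℤ)) ∘ I) j :=
        Finset.sum_le_sum fun j _ => by
          simp only [Function.comp_apply]
          exact_mod_cast hk (I j)
  -- extrema on the unit sphere
  have hsphne : (Metric.sphere (0 : EuclideanSpace ℂ (Fin N)) 1).Nonempty := by
    refine ⟨EuclideanSpace.single ⟨0, hN⟩ 1, ?_⟩
    simp [EuclideanSpace.norm_single]
  obtain ⟨u₀, hu₀, hmin⟩ := (isCompact_sphere (0 : EuclideanSpace ℂ (Fin N)) 1).exists_isMinOn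
    hsphne (gradSqAux_cont N W).continuousOn
  obtain ⟨v₀, hv₀, hmax⟩ := (isCompact_sphere (0 : EuclideanSpace ℂ (Fin N)) 1).exists_isMaxOn
    hsphne (derivSumAux_cont N s W).continuousOn
  obtain ⟨m, hmdef⟩ : ∃ m : ℝ, gradSqAux N W u₀ = m := ⟨_, rfl⟩
  obtain ⟨M, hMdef⟩ : ∃ M : ℝ, derivSumAux N s W v₀ = M := ⟨_, rfl⟩
  have hmin' : ∀ w ∈ Metric.sphere (0 : EuclideanSpace ℂ (Fin N)) 1, m ≤ gradSqAux N W w := by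
    intro w hw; rw [← hmdef]; exact isMinOn_iff.mp hmin w hw
  have hmax' : ∀ w ∈ Metric.sphere (0 : EuclideanSpace ℂ (Fin N)) 1, derivSumAux N s W w ≤ M := by
    intro w hw; rw [← hMdef]; exact isMaxOn_iff.mp hmax w hw
  have hM0 : 0 ≤ M := by
    rw [← hMdef]; exact Finset.sum_nonneg fun _ _ => norm_nonneg _
  have hm0 : 0 < m := by
    have hnonneg : 0 ≤ m := by
      rw [← hmdef]; exact Finset.sum_nonneg fun _ _ => sq_nonneg _
    rcases hnonneg.lt_or_eq with h | h
    · exact h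
    · exfalso
      have h'0 : gradSqAux N W u₀ = 0 := by rw [hmdef, ← h]
      have h' : ∑ i, ‖eval (u₀ : Fin N → ℂ) (pderiv i W)‖ ^ 2 = 0 := h'0
      have hz0 : ∀ i, eval (u₀ : Fin N → ℂ) (pderiv i W) = 0 := by
        intro i
        have h0 := (Finset.sum_eq_zero_iff_of_nonneg
          (fun i _ => sq_nonneg ‖eval (u₀ : Fin N → ℂ) (pderiv i W)‖)).mp h' i
          (Finset.mem_univ i)
        have h1 : ‖eval (u₀ : Fin N → ℂ) (pderiv i W)‖ = 0 :=
          (pow_eq_zero_iff two_ne_zero).mp h0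
        simpa using h1
      have h00 := hnd _ hz0
      have hz1 : ‖u₀‖ = 0 := by
        rw [EuclideanSpace.norm_eq]
        have hk0 : ∀ i, (u₀ : Fin N → ℂ) i = 0 := fun i => congrFun h00 i
        simp [hk0]
      rw [mem_sphere_zero_iff_norm.mp hu₀] at hz1
      norm_num at hz1
  -- the threshold
  have hms : (0:ℝ) < m ^ s := pow_pos hm0 s
  obtain ⟨a1, ha1def⟩ : ∃ a1 : ℝ, Real.sqrt (2 * C * M / m ^ s) = a1 := ⟨_, rfl⟩
  obtain ⟨a2, ha2def⟩ : ∃ a2 : ℝ, 2 * (|K| + 1) / m ^ s = a2 := ⟨_, rfl⟩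
  have ha1 : 0 ≤ a1 := ha1def ▸ Real.sqrt_nonneg _
  have ha2 : 0 ≤ a2 := ha2def ▸ by positivity
  obtain ⟨T, hTdef⟩ : ∃ T : ℝ, 1 + a1 + a2 = T := ⟨_, rfl⟩
  have hT1 : (1:ℝ) ≤ T := by linarith only [ha1, ha2, hTdef]
  have hTa1 : a1 ≤ T := by linarith only [ha1, ha2, hTdef]
  have hTa2 : a2 ≤ T := by linarith only [ha1, ha2, hTdef]
  refine ⟨T ^ d, by positivity, ?_⟩
  intro z hz
  -- rewrite the goal in terms of the auxiliary functions
  show K ≤ gradSqAux N W z ^ s - C * derivSumAux N s W z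
  obtain ⟨v, hvdef⟩ : ∃ v : Fin N → ℂ, (z : Fin N → ℂ) = v := ⟨_, rfl⟩
  have hGzdef : gradSqAux N W z = ∑ i, ‖eval v (pderiv i W)‖ ^ 2 := by
    rw [← hvdef]; rfl
  have hDzdef : derivSumAux N s W z
      = ∑ I : Fin (2 * s) → Fin N, ‖eval v ((List.ofFn I).foldl (fun p i => pderiv i p) W)‖ := by
    rw [← hvdef]; rfl
  have hTd1 : (1:ℝ) ≤ T ^ d := by
    calc (1:ℝ) = 1 ^ d := (one_pow d).symm
    _ ≤ T ^ d := pow_le_pow_left₀ (by norm_num) hT1 d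
  have hz1 : 1 ≤ ‖z‖ := le_trans hTd1 hz
  have hsum : ∑ i, ‖v i‖ ^ 2 = ‖z‖ ^ 2 := by
    rw [EuclideanSpace.norm_eq, ← hvdef,
      Real.sq_sqrt (Finset.sum_nonneg fun _ _ => sq_nonneg _)]
  -- find the scaling parameter via IVT
  have hψcont : Continuous (fun σ : ℝ => ∑ i, ‖v i‖ ^ 2 * σ ^ (2 * k i)) := by
    apply continuous_finset_sum
    intro i _
    exact continuous_const.mul (continuous_pow _)
  have hψ0 : ∑ i, ‖v i‖ ^ 2 * (0:ℝ) ^ (2 * k i) = 0 := by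
    have h0 : ∀ i : Fin N, (0:ℝ) ^ (2 * k i) = 0 := fun i => zero_pow (by have := hk i; omega)
    simp [h0]
  have hψ1 : 1 ≤ ∑ i, ‖v i‖ ^ 2 * (1:ℝ) ^ (2 * k i) := by
    simp only [one_pow, mul_one]
    rw [hsum]
    have h := pow_le_pow_left₀ (by norm_num : (0:ℝ) ≤ 1) hz1 2
    simpa using h
  obtain ⟨σ, hσmem, hσeq⟩ :
      ∃ σ ∈ Set.Icc (0:ℝ) 1, ∑ i, ‖v i‖ ^ 2 * σ ^ (2 * k i) = 1 := by
    have hIvt := intermediate_value_Icc (by norm_num : (0:ℝ) ≤ 1) hψcont.continuousOn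
    have h1 : (1:ℝ) ∈ Set.Icc (∑ i, ‖v i‖ ^ 2 * (0:ℝ) ^ (2 * k i))
        (∑ i, ‖v i‖ ^ 2 * (1:ℝ) ^ (2 * k i)) := ⟨by rw [hψ0]; norm_num, hψ1⟩
    obtain ⟨σ, h2, h3⟩ := hIvt h1
    exact ⟨σ, h2, h3⟩
  have hσ0 : 0 < σ := by
    rcases hσmem.1.lt_or_eq with h | h
    · exact h
    · exfalso; rw [← h, hψ0] at hσeq; norm_num at hσeq
  have hσ1 : σ ≤ 1 := hσmem.2
  obtain ⟨t, htdef⟩ : ∃ t : ℝ, σ⁻¹ = t := ⟨_, rfl⟩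
  have ht0 : 0 < t := htdef ▸ inv_pos.mpr hσ0
  have htσ : t * σ = 1 := by rw [← htdef]; exact inv_mul_cancel₀ hσ0.ne'
  have ht1 : 1 ≤ t := htdef ▸ one_le_inv_iff₀.mpr ⟨hσ0, hσ1⟩
  have htzne : t ≠ 0 := ht0.ne'
  -- the rescaled point on the sphere
  obtain ⟨uf, hufdef⟩ : ∃ uf : Fin N → ℂ,
      (fun j => ((σ:ℝ) : ℂ) ^ (k j) * v j) = uf := ⟨_, rfl⟩
  have hucoord : ∀ j, uf j = ((σ:ℝ) : ℂ) ^ (k j) * v j := fun j => by rw [← hufdef]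
  have hunormsq : ∑ i, ‖uf i‖ ^ 2 = 1 := by
    have hterm : ∀ i : Fin N, ‖uf i‖ ^ 2 = ‖v i‖ ^ 2 * σ ^ (2 * k i) := by
      intro i
      rw [hucoord i, norm_mul, norm_pow, Complex.norm_real, Real.norm_eq_abs, abs_of_pos hσ0,
        mul_pow, ← pow_mul, mul_comm (k i) 2]
      ring
    rw [Finset.sum_congr rfl fun i _ => hterm i]
    exact hσeq
  obtain ⟨u, hudef⟩ : ∃ u : EuclideanSpace ℂ (Fin N), u = (WithLp.toLp 2 uf : EuclideanSpace ℂ (Fin N)) :=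
    ⟨_, rfl⟩
  have hucoe : (u : Fin N → ℂ) = uf := by rw [hudef]
  have hunorm : ‖u‖ = 1 := by
    rw [EuclideanSpace.norm_eq]
    have : ∀ i, ‖u i‖ = ‖uf i‖ := fun i => by rw [hucoe]
    rw [Finset.sum_congr rfl fun i _ => by rw [this i]]
    rw [hunormsq, Real.sqrt_one]
  have humem : u ∈ Metric.sphere (0 : EuclideanSpace ℂ (Fin N)) 1 :=
    mem_sphere_zero_iff_norm.mpr hunorm
  have hGudef : gradSqAux N W u = ∑ i, ‖eval uf (pderiv i W)‖ ^ 2 := by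
    rw [hudef]; rfl
  have hDudef : derivSumAux N s W u
      = ∑ I : Fin (2 * s) → Fin N, ‖eval uf ((List.ofFn I).foldl (fun p i => pderiv i p) W)‖ := by
    rw [hudef]; rfl
  have hz_eq : v = fun j => ((t:ℝ) : ℂ) ^ (k j) * uf j := by
    funext j
    rw [hucoord j, ← mul_assoc, ← mul_pow, ← Complex.ofReal_mul, htσ]
    simp
  -- t is large
  have hψσ : (σ ^ d) ^ 2 * ‖z‖ ^ 2 ≤ 1 := by
    calc (σ ^ d) ^ 2 * ‖z‖ ^ 2 = ∑ i, ‖v i‖ ^ 2 * σ ^ (2 * d) := by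
          rw [← Finset.sum_mul, hsum, ← pow_mul, mul_comm d 2]; ring
    _ ≤ ∑ i, ‖v i‖ ^ 2 * σ ^ (2 * k i) :=
        Finset.sum_le_sum fun i _ => mul_le_mul_of_nonneg_left
          (pow_le_pow_of_le_one hσ0.le hσ1 (by have := h2k i; omega)) (sq_nonneg _)
    _ = 1 := hσeq
  have hσd : σ ^ d * t ^ d = 1 := by
    rw [← mul_pow, mul_comm σ t, htσ, one_pow]
  have hzt : ‖z‖ ≤ t ^ d := by
    have hmul := mul_le_mul_of_nonneg_left hψσ (sq_nonneg (t ^ d))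
    have h1 : ‖z‖ ^ 2 ≤ (t ^ d) ^ 2 := by
      calc ‖z‖ ^ 2 = ((σ ^ d * t ^ d) ^ 2) * ‖z‖ ^ 2 := by rw [hσd]; ring
      _ = (t ^ d) ^ 2 * ((σ ^ d) ^ 2 * ‖z‖ ^ 2) := by ring
      _ ≤ (t ^ d) ^ 2 * 1 := hmul
      _ = (t ^ d) ^ 2 := by ring
    calc ‖z‖ = Real.sqrt (‖z‖ ^ 2) := (Real.sqrt_sq (norm_nonneg z)).symm
    _ ≤ Real.sqrt ((t ^ d) ^ 2) := Real.sqrt_le_sqrt h1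
    _ = t ^ d := Real.sqrt_sq (pow_pos ht0 d).le
  have hTt : T ≤ t := le_of_pow_le_pow_left₀ hd.ne' ht0.le (le_trans hz hzt)
  -- main estimates
  have hsq : ∀ e : ℤ, (t ^ e) ^ 2 = t ^ (2 * e) := fun e => by
    rw [mul_comm, zpow_mul, zpow_two]; ring
  have hGz : t ^ (d : ℤ) * m ≤ gradSqAux N W z := by
    have hterm : ∀ i : Fin N,
        t ^ (d : ℤ) * ‖eval uf (pderiv i W)‖ ^ 2 ≤ ‖eval v (pderiv i W)‖ ^ 2 := by
      intro i
      have hne := (hD1 i).norm_eval ht0 uf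
      rw [← hz_eq] at hne
      rw [hne, mul_pow, hsq]
      apply mul_le_mul_of_nonneg_right _ (sq_nonneg _)
      apply zpow_le_zpow_right₀ ht1
      have := h2k i
      omega
    rw [hGzdef]
    calc t ^ (d : ℤ) * m ≤ t ^ (d : ℤ) * gradSqAux N W u :=
          mul_le_mul_of_nonneg_left (hmin' u humem) (zpow_nonneg ht0.le _)
    _ = ∑ i, t ^ (d : ℤ) * ‖eval uf (pderiv i W)‖ ^ 2 := by
          rw [hGudef, Finset.mul_sum]
    _ ≤ ∑ i, ‖eval v (pderiv i W)‖ ^ 2 := Finset.sum_le_sum fun i _ => hterm i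
  have htd1 : (1:ℝ) ≤ t ^ (d : ℤ) := by
    have h := zpow_le_zpow_right₀ ht1 (show (0:ℤ) ≤ (d:ℤ) by positivity)
    simpa using h
  have hGz0 : 0 ≤ gradSqAux N W z := le_trans (by positivity) hGz
  have hGz_pow : t ^ (d : ℤ) * m ^ s ≤ gradSqAux N W z ^ s := by
    have h1 : (t ^ (d : ℤ) * m) ^ s ≤ gradSqAux N W z ^ s :=
      pow_le_pow_left₀ (by positivity) hGz s
    have h2 : t ^ (d : ℤ) * m ^ s ≤ (t ^ (d : ℤ) * m) ^ s := by
      rw [mul_pow]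
      exact mul_le_mul_of_nonneg_right (le_self_pow₀ htd1 (by omega)) (pow_nonneg hm0.le s)
    linarith only [h1, h2]
  have hDz : derivSumAux N s W z ≤ t ^ ((d : ℤ) - 2) * M := by
    have hterm : ∀ I : Fin (2 * s) → Fin N,
        ‖eval v ((List.ofFn I).foldl (fun p i => pderiv i p) W)‖
          ≤ t ^ ((d : ℤ) - 2) * ‖eval uf ((List.ofFn I).foldl (fun p i => pderiv i p) W)‖ := by
      intro I
      have hne := (hDI I).norm_eval ht0 uf
      rw [← hz_eq] at hne
      rw [hne]
      apply mul_le_mul_of_nonneg_right _ (norm_nonneg _)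
      apply zpow_le_zpow_right₀ ht1
      have h1 := hsumI I
      have h2 : (2 : ℤ) ≤ 2 * s := by
        have h3 : (1:ℤ) ≤ (s:ℤ) := by exact_mod_cast hs
        omega
      omega
    rw [hDzdef]
    calc (∑ I : Fin (2 * s) → Fin N, ‖eval v ((List.ofFn I).foldl (fun p i => pderiv i p) W)‖)
        ≤ ∑ I : Fin (2 * s) → Fin N,
            t ^ ((d : ℤ) - 2) * ‖eval uf ((List.ofFn I).foldl (fun p i => pderiv i p) W)‖ :=
          Finset.sum_le_sum fun I _ => hterm I
    _ = t ^ ((d : ℤ) - 2) * derivSumAux N s W u := by rw [hDudef, Finset.mul_sum]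
    _ ≤ t ^ ((d : ℤ) - 2) * M :=
          mul_le_mul_of_nonneg_left (hmax' u humem) (zpow_nonneg ht0.le _)
  -- final arithmetic
  have htd2 : (0:ℝ) < t ^ ((d : ℤ) - 2) := zpow_pos ht0 _
  have e1 : t ^ (d : ℤ) = t ^ ((d : ℤ) - 2) * t ^ 2 := by
    rw [← zpow_natCast t 2, ← zpow_add₀ htzne]
    norm_num
  have ht2 : 2 * C * M / m ^ s ≤ t ^ 2 := by
    have h1 : a1 ≤ t := le_trans hTa1 hTt
    have h2 : a1 ^ 2 = 2 * C * M / m ^ s := by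
      rw [← ha1def]; exact Real.sq_sqrt (by positivity)
    rw [← h2]
    exact pow_le_pow_left₀ ha1 h1 2
  have h2CM : 2 * C * M ≤ t ^ 2 * m ^ s := by
    rw [div_le_iff₀ hms] at ht2
    linarith only [ht2]
  have hAt : t ≤ t ^ (d : ℤ) := by
    have h := zpow_le_zpow_right₀ ht1 (show (1:ℤ) ≤ (d:ℤ) by exact_mod_cast hd)
    simpa using h
  have step1 : t * (m ^ s / 2) ≤ t ^ (d : ℤ) * m ^ s - C * (t ^ ((d : ℤ) - 2) * M) := by
    have hCAM : C * (t ^ ((d : ℤ) - 2) * M) ≤ t ^ ((d : ℤ) - 2) * (t ^ 2 * m ^ s) / 2 := by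
      have hCM : C * M ≤ t ^ 2 * m ^ s / 2 := by linarith only [h2CM]
      calc C * (t ^ ((d : ℤ) - 2) * M) = t ^ ((d : ℤ) - 2) * (C * M) := by ring
      _ ≤ t ^ ((d : ℤ) - 2) * (t ^ 2 * m ^ s / 2) := mul_le_mul_of_nonneg_left hCM htd2.le
      _ = t ^ ((d : ℤ) - 2) * (t ^ 2 * m ^ s) / 2 := by ring
    have e2 : t ^ (d : ℤ) * m ^ s = t ^ ((d : ℤ) - 2) * (t ^ 2 * m ^ s) := by
      rw [e1]; ring
    have h3 : t * m ^ s ≤ t ^ ((d : ℤ) - 2) * (t ^ 2 * m ^ s) := by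
      rw [← e2]
      exact mul_le_mul_of_nonneg_right hAt hms.le
    linarith only [hCAM, e2, h3]
  have step2 : K ≤ t * (m ^ s / 2) := by
    have h4 : a2 ≤ t := le_trans hTa2 hTt
    have h5 : a2 * (m ^ s / 2) = |K| + 1 := by
      rw [← ha2def]; field_simp
    have h6 : a2 * (m ^ s / 2) ≤ t * (m ^ s / 2) :=
      mul_le_mul_of_nonneg_right h4 (by positivity)
    have h7 : K ≤ |K| + 1 := le_trans (le_abs_self K) (by linarith only [])
    linarith only [h5, h6, h7]
  have h8 : C * derivSumAux N s W z ≤ C * (t ^ ((d : ℤ) - 2) * M) :=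
    mul_le_mul_of_nonneg_left hDz hC.le
  linarith only [hGz_pow, step1, step2, h8]
end

section
/- (Weights of invertible nondegenerate polynomials of chain and loop type.) Let a₁,…,a_N be integers with aᵢ ≥ 2 for all i. (i) Chain type: the weights q₁,…,q_N determined by the system aᵢqᵢ + q_{i+1} = 1 for 1 ≤ i ≤ N−1 and a_N q_N = 1 (these make W_chain = z₁^{a₁}z₂ + z₂^{a₂}z₃ + ⋯ + z_{N−1}^{a_{N−1}}z_N + z_N^{a_N} quasi-homogeneous of total weight 1) satisfy 0 < qᵢ ≤ 1/2 for every i. (ii) Loop type (N ≥ 2): the linear system aᵢqᵢ + q_{i+1} = 1 with indices taken modulo N (these make W_loop = z₁^{a₁}z₂ + z₂^{a₂}z₃ + ⋯ + z_N^{a_N}z₁ quasi-homogeneous of total weight 1) has a unique solution (q₁,…,q_N), and it satisfies 0 < qᵢ ≤ 1/2 for every i. -/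
/-- Iteration `t ↦ (t, 1 - A 0 * t, …)` used to construct the loop weights. -/
def loopF (A : ℕ → ℚ) (t : ℚ) : ℕ → ℚ
  | 0 => t
  | k + 1 => 1 - A k * loopF A t k

/-- The linear coefficient of `loopF A t k` in `t`. -/
def loopG (A : ℕ → ℚ) : ℕ → ℚ
  | 0 => 1
  | k + 1 => -A k * loopG A k

lemma loopF_linear (A : ℕ → ℚ) (t : ℚ) (k : ℕ) :
    loopF A t k = loopF A 0 k + loopG A k * t := by
  induction k with
  | zero => simp [loopF, loopG]
  | succ k ih => simp only [loopF, loopG, ih]; ring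

lemma loopG_abs (A : ℕ → ℚ) (hA : ∀ k, 2 ≤ A k) (k : ℕ) :
    (2:ℚ)^k ≤ |loopG A k| := by
  induction k with
  | zero => simp [loopG]
  | succ k ih =>
      have h2 := hA k
      rw [loopG, abs_mul, abs_neg, abs_of_nonneg (by linarith : (0:ℚ) ≤ A k)]
      calc (2:ℚ)^(k+1) = 2 * 2^k := by ring
        _ ≤ A k * |loopG A k| :=
            mul_le_mul h2 ih (by positivity) (by linarith)

open Fin.NatCast Fin.CommRing in
/-- **Weights of invertible nondegenerate polynomials of chain and loop type.**
Let `a₁,…,a_N` be integers with `aᵢ ≥ 2`.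
(i) Chain type: the weights determined by `aᵢqᵢ + q_{i+1} = 1` (for `i < N`) and
`a_N q_N = 1`, which make `W_chain = z₁^{a₁}z₂ + ⋯ + z_{N−1}^{a_{N−1}}z_N + z_N^{a_N}`
quasi-homogeneous of total weight `1`, satisfy `0 < qᵢ ≤ 1/2` for every `i`.
(ii) Loop type (`N ≥ 2`): the system `aᵢqᵢ + q_{i+1} = 1` with indices modulo `N`,
which makes `W_loop = z₁^{a₁}z₂ + ⋯ + z_N^{a_N}z₁` quasi-homogeneous of total weight
`1`, has a unique solution, and it satisfies `0 < qᵢ ≤ 1/2` for every `i`. -/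
theorem chain_loop_weights (N : ℕ) (a : Fin N → ℕ) (ha : ∀ i, 2 ≤ a i) :
    ((1 ≤ N) → ∀ q : Fin N → ℚ,
        (∀ i : Fin N, ∀ h : i.1 + 1 < N, (a i : ℚ) * q i + q ⟨i.1 + 1, h⟩ = 1) →
        (∀ h : N - 1 < N, (a ⟨N - 1, h⟩ : ℚ) * q ⟨N - 1, h⟩ = 1) →
        ∀ i, 0 < q i ∧ q i ≤ 1 / 2)
    ∧ (∀ h2 : 2 ≤ N,
        (∃! q : Fin N → ℚ, ∀ i : Fin N,
            (a i : ℚ) * q i + q (i + ⟨1, by omega⟩) = 1)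
        ∧ ∀ q : Fin N → ℚ,
            (∀ i : Fin N, (a i : ℚ) * q i + q (i + ⟨1, by omega⟩) = 1) →
            ∀ i, 0 < q i ∧ q i ≤ 1 / 2) := by
  constructor
  · -- chain type
    intro hN q hrel hlast
    have key : ∀ k m : ℕ, m + k = N - 1 →
        ∀ hm : m < N, 0 < q ⟨m, hm⟩ ∧ q ⟨m, hm⟩ ≤ 1/2 := by
      intro k
      induction k with
      | zero =>
        intro m hm hmN
        have hm' : m = N - 1 := by omega
        subst hm'
        have h := hlast hmN
        have ha2 : (2:ℚ) ≤ (a ⟨N-1, hmN⟩ : ℚ) := by exact_mod_cast ha _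
        have h0 : 0 < q ⟨N-1, hmN⟩ := by nlinarith
        exact ⟨h0, by nlinarith⟩
      | succ k ih =>
        intro m hm hmN
        have hm1 : m + 1 < N := by omega
        obtain ⟨h1, h2⟩ := ih (m+1) (by omega) hm1
        have h := hrel ⟨m, hmN⟩ hm1
        have ha2 : (2:ℚ) ≤ (a ⟨m, hmN⟩ : ℚ) := by exact_mod_cast ha _
        have h0 : 0 < q ⟨m, hmN⟩ := by nlinarith
        exact ⟨h0, by nlinarith⟩
    intro i
    have := key (N - 1 - i.1) i.1 (by omega) i.2
    simpa using this
  · -- loop type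
    intro h2
    haveI : NeZero N := ⟨by omega⟩
    have hone : (⟨1, by omega⟩ : Fin N) = 1 := by
      apply Fin.ext
      rw [Fin.val_one']
      exact (Nat.mod_eq_of_lt (by omega)).symm
    simp only [hone]
    -- bounds for any solution
    have bound : ∀ q : Fin N → ℚ,
        (∀ i : Fin N, (a i : ℚ) * q i + q (i + 1) = 1) →
        ∀ i, 0 < q i ∧ q i ≤ 1 / 2 := by
      intro q hq
      have hstep : ∀ i : Fin N, q (i + 1) = 1 - (a i : ℚ) * q i := fun i => by
        linarith [hq i]
      have hpos : ∀ i, 0 < q i := by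
        by_contra hcon
        push_neg at hcon
        obtain ⟨j, hj⟩ := hcon
        have claim : ∀ k : ℕ, q (j + ((2*k : ℕ) : Fin N)) ≤ 0 ∧
            (k:ℚ) - q j ≤ - q (j + ((2*k : ℕ) : Fin N)) := by
          intro k
          induction k with
          | zero =>
            have h0 : j + ((2*0 : ℕ) : Fin N) = j := by norm_num
            rw [h0]
            refine ⟨hj, ?_⟩
            push_cast
            linarith
          | succ k ih =>
            obtain ⟨c1, c2⟩ := ih
            set i : Fin N := j + ((2*k : ℕ) : Fin N) with hi
            have ha2 : (2:ℚ) ≤ (a i : ℚ) := by exact_mod_cast ha i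
            have ha2' : (2:ℚ) ≤ (a (i+1) : ℚ) := by exact_mod_cast ha (i+1)
            have e1 : q (i + 1) = 1 - (a i : ℚ) * q i := hstep i
            have e2 : q (i + 1 + 1) = 1 - (a (i+1) : ℚ) * q (i+1) := hstep (i+1)
            have hq1 : (1:ℚ) - 2 * q i ≤ q (i + 1) := by nlinarith
            have hq2 : q (i + 1 + 1) ≤ 1 - 2 * q (i+1) := by nlinarith
            have hidx : j + ((2*(k+1) : ℕ) : Fin N) = i + 1 + 1 := by
              rw [hi]; push_cast; ring
            rw [hidx]
            constructor
            · linarith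
            · push_cast; linarith
        have hc := (claim N).2
        have hNz : ((2*N : ℕ) : Fin N) = 0 := by
          push_cast [Fin.natCast_self]; ring
        rw [hNz, add_zero] at hc
        have hN0 : (0:ℚ) < (N:ℚ) := by exact_mod_cast (by omega : 0 < N)
        linarith
      intro i
      refine ⟨hpos i, ?_⟩
      have h1 := hpos (i + 1)
      have ha2 : (2:ℚ) ≤ (a i : ℚ) := by exact_mod_cast ha i
      have := hq i
      nlinarith [hpos i]
    -- uniqueness of solutions
    have uniq : ∀ q q' : Fin N → ℚ,
        (∀ i : Fin N, (a i : ℚ) * q i + q (i + 1) = 1) →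
        (∀ i : Fin N, (a i : ℚ) * q' i + q' (i + 1) = 1) → q = q' := by
      intro q q' hq hq'
      funext j
      have key : ∀ k : ℕ, (2:ℚ)^k * |q j - q' j| ≤
          |q (j + (k : Fin N)) - q' (j + (k : Fin N))| := by
        intro k
        induction k with
        | zero => simp
        | succ k ih =>
          set i : Fin N := j + (k : Fin N) with hi
          have ha2 : (2:ℚ) ≤ (a i : ℚ) := by exact_mod_cast ha i
          have e : q (i+1) - q' (i+1) = -(a i : ℚ) * (q i - q' i) := by
            linarith [hq i, hq' i]
          have hidx : j + ((k+1 : ℕ) : Fin N) = i + 1 := by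
            rw [hi]; push_cast; ring
          rw [hidx, e, abs_mul, abs_neg,
            abs_of_nonneg (le_trans (by norm_num) ha2)]
          calc (2:ℚ)^(k+1) * |q j - q' j| = 2 * (2^k * |q j - q' j|) := by ring
            _ ≤ 2 * |q i - q' i| := by linarith
            _ ≤ (a i : ℚ) * |q i - q' i| := by
                nlinarith [abs_nonneg (q i - q' i)]
      have hk := key N
      rw [Fin.natCast_self, add_zero] at hk
      have h4 : (4:ℚ) ≤ 2^N := by
        calc (4:ℚ) = 2^2 := by norm_num
        _ ≤ 2^N := by exact pow_le_pow_right₀ (by norm_num) h2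
      have h5 : 4 * |q j - q' j| ≤ |q j - q' j| :=
        le_trans (mul_le_mul_of_nonneg_right h4 (abs_nonneg _)) hk
      have h6 : |q j - q' j| = 0 :=
        le_antisymm (by linarith) (abs_nonneg _)
      have := abs_eq_zero.mp h6
      linarith
    -- existence
    set A : ℕ → ℚ := fun k => (a ((k : ℕ) : Fin N) : ℚ) with hAdef
    have hA2 : ∀ k, 2 ≤ A k := fun k => by simp only [hAdef]; exact_mod_cast ha _
    have hgN : loopG A N ≠ 1 := by
      have h4 : (4:ℚ) ≤ |loopG A N| := by
        calc (4:ℚ) = 2^2 := by norm_num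
        _ ≤ 2^N := by exact pow_le_pow_right₀ (by norm_num) h2
        _ ≤ |loopG A N| := loopG_abs A hA2 N
      intro h; rw [h] at h4; norm_num at h4
    have hdenom : (1:ℚ) - loopG A N ≠ 0 := fun h => hgN (by linarith)
    set t0 : ℚ := loopF A 0 N / (1 - loopG A N) with ht0
    have hfix : loopF A t0 N = t0 := by
      rw [loopF_linear, ht0]
      field_simp
      ring
    set q0 : Fin N → ℚ := fun i => loopF A t0 i.1 with hq0def
    have hq0 : ∀ i : Fin N, (a i : ℚ) * q0 i + q0 (i + 1) = 1 := by
      intro i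
      have hAi : A i.1 = (a i : ℚ) := by
        simp [hAdef, Fin.cast_val_eq_self]
      have hval : (i + (1 : Fin N)).1 = (i.1 + 1) % N := by
        simp [Fin.add_def, Fin.val_one']
      by_cases hlt : i.1 + 1 < N
      · have hv : (i + (1 : Fin N)).1 = i.1 + 1 := by
          rw [hval, Nat.mod_eq_of_lt hlt]
        have : q0 (i + 1) = loopF A t0 (i.1 + 1) := by
          rw [hq0def]; simp only; rw [hv]
        rw [this, loopF]
        rw [hAi]
        ring
      · have hi1 : i.1 = N - 1 := by omega
        have hv : (i + (1 : Fin N)).1 = 0 := by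
          rw [hval, hi1]
          have : N - 1 + 1 = N := by omega
          rw [this, Nat.mod_self]
        have hq01 : q0 (i + 1) = t0 := by
          rw [hq0def]; simp only; rw [hv]; rfl
        have hNsucc : N - 1 + 1 = N := by omega
        have hF : loopF A t0 N = 1 - A (N-1) * loopF A t0 (N-1) := by
          conv_lhs => rw [← hNsucc]
          rw [loopF]
        have hAi' : A (N-1) = (a i : ℚ) := by rw [← hi1, hAi]
        have : (a i : ℚ) * loopF A t0 (N-1) = 1 - t0 := by
          rw [← hAi']
          linarith [hfix, hF]
        rw [hq01, hq0def]
        simp only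
        rw [hi1]
        linarith
    exact ⟨⟨q0, hq0, fun q' hq' => uniq q' q0 hq' hq0⟩, bound⟩
end
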